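/- Let G be a finite simple graph with vertex set V, let u ∈ V have exactly two neighbours v_1 and v_2, and suppose V ∖ {u} is partitioned into sets V_1 ∋ v_1 and V_2 ∋ v_2 with no edge of G joining a vertex of V_1 to a vertex of V_2. Let G_2 be the subgraph of G induced on V_2 and let N be the set of neighbours of v_2 in G_2. Then the X measurement X_u(G), taken with chosen neighbour v_2, is the graph on vertex set V ∖ {u} whose edges are exactly: all edges of G between vertices of V_1; an edge from v_1 to v_2 and from v_1 to every vertex of N; and all edges of G between vertices of V_2 except the edges joining v_2 to the vertices of N. -/

import Mathlib

/-- A finite simple graph with an explicit vertex set inside an ambient type `α`. -/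
structure FGraph (α : Type*) where
  verts : Set α
  Adj : α → α → Prop
  symm : ∀ {a b}, Adj a b → Adj b a
  loopless : ∀ a, ¬ Adj a a
  edge_mem : ∀ {a b}, Adj a b → a ∈ verts ∧ b ∈ verts

namespace FGraph

variable {α : Type*}

/-- Local complementation at `v`: two distinct vertices are adjacent iff exactly one of
(adjacent in `G`) or (both neighbours of `v` in `G`) holds. -/
def LC (G : FGraph α) (v : α) : FGraph α where
  verts := G.verts
  Adj a b := a ≠ b ∧ Xor' (G.Adj a b) (G.Adj v a ∧ G.Adj v b)
  symm := by
    rintro a b ⟨hne, h⟩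
    refine ⟨hne.symm, ?_⟩
    rcases h with ⟨h1, h2⟩ | ⟨h1, h2⟩
    · exact Or.inl ⟨G.symm h1, fun hx => h2 ⟨hx.2, hx.1⟩⟩
    · exact Or.inr ⟨⟨h1.2, h1.1⟩, fun hx => h2 (G.symm hx)⟩
  loopless := fun a h => h.1 rfl
  edge_mem := by
    rintro a b ⟨hne, h⟩
    rcases h with ⟨h1, _⟩ | ⟨⟨ha, hb⟩, _⟩
    · exact G.edge_mem h1
    · exact ⟨(G.edge_mem ha).2, (G.edge_mem hb).2⟩

/-- Z measurement at `v`: delete the vertex `v` together with all incident edges. -/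
def ZM (G : FGraph α) (v : α) : FGraph α where
  verts := G.verts \ {v}
  Adj a b := G.Adj a b ∧ a ≠ v ∧ b ≠ v
  symm := fun h => ⟨G.symm h.1, h.2.2, h.2.1⟩
  loopless := fun a h => G.loopless a h.1
  edge_mem := by
    rintro a b ⟨h, ha, hb⟩
    exact ⟨⟨(G.edge_mem h).1, ha⟩, ⟨(G.edge_mem h).2, hb⟩⟩

/-- X measurement at `u` with chosen neighbour `w`:
`X_u(G) = LC_w(Z_u(LC_u(LC_w(G))))`. -/
def XM (G : FGraph α) (u w : α) : FGraph α :=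
  ((((G.LC w).LC u).ZM u).LC w)

/-- Y measurement at `v`: `Y_v(G) = Z_v(LC_v(G))`. -/
def YM (G : FGraph α) (v : α) : FGraph α :=
  (G.LC v).ZM v

/-- `G` is a star graph with centre `c`. -/
def IsStar (G : FGraph α) (c : α) : Prop :=
  c ∈ G.verts ∧
    ∀ a b, G.Adj a b ↔ (a ≠ b ∧ a ∈ G.verts ∧ b ∈ G.verts ∧ (a = c ∨ b = c))

/-- `G` is a complete graph on its vertex set. -/
def IsComplete (G : FGraph α) : Prop :=
  ∀ a b, G.Adj a b ↔ (a ≠ b ∧ a ∈ G.verts ∧ b ∈ G.verts)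

/-- One step of local complementation or vertex deletion. -/
inductive Step : FGraph α → FGraph α → Prop
  | lc (G : FGraph α) (v : α) : Step G (G.LC v)
  | del (G : FGraph α) (v : α) : Step G (G.ZM v)

/-- `H` is a vertex-minor of `G`: `H` is obtained from `G` by a finite sequence of
local complementations and vertex deletions. -/
def IsVertexMinor (H G : FGraph α) : Prop :=
  Relation.ReflTransGen Step G H

/-- One step of local complementation. -/
inductive LCStep : FGraph α → FGraph α → Prop
  | lc (G : FGraph α) (v : α) : LCStep G (G.LC v)

/-- `H` is obtained from `G` by a finite sequence of local complementations. -/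
def LCReach (G H : FGraph α) : Prop :=
  Relation.ReflTransGen LCStep G H

end FGraph

set_option maxHeartbeats 1000000

/-- the effect of an X measurement at a degree-two vertex `u` with
chosen neighbour `v₂`, where `V \ {u}` is split into `V₁ ∋ v₁` and `V₂ ∋ v₂`
with no edges between the two parts.  Here `{x ∈ V₂ | G.Adj v₂ x}` is the
neighbourhood `N` of `v₂` in the subgraph `G₂` induced on `V₂`. -/
theorem xMeasurement_merge {α : Type*} (G : FGraph α) (u v₁ v₂ : α) (V₁ V₂ : Set α)
    (hu : u ∈ G.verts)
    (huv₁ : G.Adj u v₁) (huv₂ : G.Adj u v₂) (hv₁v₂ : v₁ ≠ v₂)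
    (honly : ∀ x, G.Adj u x → x = v₁ ∨ x = v₂)
    (hpart : V₁ ∪ V₂ = G.verts \ {u})
    (hdisj : Disjoint V₁ V₂)
    (hv₁ : v₁ ∈ V₁) (hv₂ : v₂ ∈ V₂)
    (hnoedge : ∀ a ∈ V₁, ∀ b ∈ V₂, ¬ G.Adj a b) :
    (G.XM u v₂).verts = G.verts \ {u} ∧
    ∀ a b, (G.XM u v₂).Adj a b ↔
      ((a ∈ V₁ ∧ b ∈ V₁ ∧ G.Adj a b) ∨
       ((a = v₁ ∧ b ∈ insert v₂ {x ∈ V₂ | G.Adj v₂ x}) ∨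
        (b = v₁ ∧ a ∈ insert v₂ {x ∈ V₂ | G.Adj v₂ x})) ∨
       (a ∈ V₂ ∧ b ∈ V₂ ∧ G.Adj a b ∧
         ¬ ((a = v₂ ∧ b ∈ {x ∈ V₂ | G.Adj v₂ x}) ∨
            (b = v₂ ∧ a ∈ {x ∈ V₂ | G.Adj v₂ x})))) := by
  classical
  -- basic facts
  have hv2u : G.Adj v₂ u := G.symm huv₂
  have hv1u : G.Adj v₁ u := G.symm huv₁
  have hneq : ∀ x y, G.Adj x y → x ≠ y := fun x y h hxy => G.loopless y (hxy ▸ h)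
  have hv1ne_u : v₁ ≠ u := hneq v₁ u hv1u
  have hv2ne_u : v₂ ≠ u := hneq v₂ u hv2u
  have huu : ¬ G.Adj u u := G.loopless u
  have hune1 : u ≠ v₁ := fun h => hv1ne_u h.symm
  have hune2 : u ≠ v₂ := fun h => hv2ne_u h.symm
  have hv21ne : v₂ ≠ v₁ := fun h => hv₁v₂ h.symm
  have hv1v1 : ¬ G.Adj v₁ v₁ := G.loopless v₁
  have hv2v2 : ¬ G.Adj v₂ v₂ := G.loopless v₂
  have hdisj' : ∀ x, x ∈ V₁ → x ∈ V₂ → False := fun x h1 h2 => (Set.disjoint_left.mp hdisj h1) h2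
  have hsub : ∀ x, x ∈ V₁ ∨ x ∈ V₂ → x ∈ G.verts ∧ x ≠ u := by
    intro x hx
    have hx' : x ∈ V₁ ∪ V₂ := hx.elim (Set.mem_union_left _) (Set.mem_union_right _)
    rw [hpart] at hx'
    exact ⟨hx'.1, hx'.2⟩
  have hvsplit : ∀ x, x ∈ G.verts → x = u ∨ x ∈ V₁ ∨ x ∈ V₂ := by
    intro x hx
    by_cases h : x = u
    · exact Or.inl h
    · have hx' : x ∈ V₁ ∪ V₂ := by rw [hpart]; exact ⟨hx, h⟩
      exact Or.inr hx'
  have hnV1 : ∀ x, x ∈ V₁ → ¬ G.Adj v₂ x := fun x hx h => hnoedge x hx v₂ hv₂ (G.symm h)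
  have hv2v1 : ¬ G.Adj v₂ v₁ := hnV1 v₁ hv₁
  have hv1v2 : ¬ G.Adj v₁ v₂ := hnoedge v₁ hv₁ v₂ hv₂
  have hv1nV2 : v₁ ∉ V₂ := fun h => hdisj' v₁ hv₁ h
  have hv2nV1 : v₂ ∉ V₁ := fun h => hdisj' v₂ h hv₂
  have hunV1 : u ∉ V₁ := fun h => (hsub u (Or.inl h)).2 rfl
  have hunV2 : u ∉ V₂ := fun h => (hsub u (Or.inr h)).2 rfl
  have hnoedge' : ∀ x ∈ V₂, ∀ y ∈ V₁, ¬ G.Adj x y := fun x hx y hy h => hnoedge y hy x hx (G.symm h)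
  have hloc : ∀ x, x = u ∨ x = v₁ ∨ x = v₂ ∨
      (x ∈ V₁ ∧ x ≠ v₁ ∧ x ≠ u ∧ x ≠ v₂ ∧ ¬ G.Adj u x ∧ ¬ G.Adj v₂ x ∧ x ∉ V₂) ∨
      (x ∈ V₂ ∧ x ≠ v₂ ∧ x ≠ u ∧ x ≠ v₁ ∧ ¬ G.Adj u x ∧ x ∉ V₁) ∨
      ((∀ y, ¬ G.Adj x y) ∧ (∀ y, ¬ G.Adj y x) ∧ x ∉ V₁ ∧ x ∉ V₂ ∧ x ≠ v₁ ∧ x ≠ v₂ ∧ x ≠ u) := by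
    intro x
    by_cases hxu : x = u
    · exact Or.inl hxu
    by_cases hx1 : x = v₁
    · exact Or.inr (Or.inl hx1)
    by_cases hx2 : x = v₂
    · exact Or.inr (Or.inr (Or.inl hx2))
    by_cases hxv : x ∈ G.verts
    · rcases hvsplit x hxv with h|h|h
      · exact absurd h hxu
      · refine Or.inr (Or.inr (Or.inr (Or.inl ⟨h, hx1, hxu, hx2, ?_, hnV1 x h, fun h2 => hdisj' x h h2⟩)))
        intro hux
        rcases honly x hux with h'|h' <;> [exact hx1 h'; exact hx2 h']
      · refine Or.inr (Or.inr (Or.inr (Or.inr (Or.inl ⟨h, hx2, (hsub x (Or.inr h)).2, hx1, ?_, fun h2 => hdisj' x h2 h⟩))))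
        intro hux
        rcases honly x hux with h'|h' <;> [exact hx1 h'; exact hx2 h']
    · refine Or.inr (Or.inr (Or.inr (Or.inr (Or.inr ⟨fun y h => hxv (G.edge_mem h).1,
        fun y h => hxv (G.edge_mem h).2, fun h => hxv (hsub x (Or.inl h)).1,
        fun h => hxv (hsub x (Or.inr h)).1, ?_, ?_, ?_⟩))))
      · rintro rfl; exact hxv (hsub x (Or.inl hv₁)).1
      · rintro rfl; exact hxv (hsub x (Or.inr hv₂)).1
      · rintro rfl; exact hxv hu
  have hMadj : ∀ a b, ((((G.LC v₂).LC u).ZM u).Adj a b) ↔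
      ((a ∈ V₁ ∧ b ∈ V₁ ∧ G.Adj a b) ∨
       ((a = v₁ ∧ b ∈ insert v₂ {x ∈ V₂ | G.Adj v₂ x}) ∨
        (b = v₁ ∧ a ∈ insert v₂ {x ∈ V₂ | G.Adj v₂ x})) ∨
       (a ∈ V₂ ∧ b ∈ V₂ ∧ G.Adj a b ∧
         ¬ ((a = v₂ ∧ b ∈ {x ∈ V₂ | G.Adj v₂ x}) ∨
            (b = v₂ ∧ a ∈ {x ∈ V₂ | G.Adj v₂ x})))) := by
    intro a b
    have hab := hneq a b
    have hba := hneq b a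
    have hcr1 : a ∈ V₁ → b ∈ V₂ → ¬ G.Adj a b := fun h1 h2 => hnoedge a h1 b h2
    have hcr2 : a ∈ V₂ → b ∈ V₁ → ¬ G.Adj a b := fun h1 h2 => hnoedge' a h1 b h2
    have hsymm : G.Adj b a ↔ G.Adj a b := ⟨G.symm, G.symm⟩
    simp only [FGraph.ZM, FGraph.LC, Xor', xor_def, Set.mem_insert_iff, Set.mem_setOf_eq]
    rcases hloc a with rfl|rfl|rfl|⟨ha1,ha2,ha3,ha4,ha5,ha6,ha7⟩|⟨ha1,ha2,ha3,ha4,ha5,ha6⟩|⟨ha1,ha2,ha3,ha4,ha5,ha6,ha7⟩ <;>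
      rcases hloc b with rfl|rfl|rfl|⟨hb1,hb2,hb3,hb4,hb5,hb6,hb7⟩|⟨hb1,hb2,hb3,hb4,hb5,hb6⟩|⟨hb1,hb2,hb3,hb4,hb5,hb6,hb7⟩ <;>
      clear hloc hvsplit hsub hneq honly hdisj hdisj' hnV1 hpart hu hnoedge hnoedge' <;>
      simp_all <;> tauto
  have hMne : ∀ a b, ((((G.LC v₂).LC u).ZM u).Adj a b) → a ≠ b := fun a b h => h.1.1
  have hMv2 : ∀ x, ((((G.LC v₂).LC u).ZM u).Adj v₂ x) ↔ x = v₁ := by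
    intro x
    rw [hMadj]
    constructor
    · rintro (⟨h1,_,_⟩|⟨⟨h1,_⟩|⟨h1,_⟩⟩|⟨_,hxV2,hadj,hnot⟩)
      · exact absurd h1 hv2nV1
      · exact absurd h1 hv21ne
      · exact h1
      · exact absurd (Or.inl ⟨rfl, ⟨hxV2, hadj⟩⟩) hnot
    · rintro rfl
      exact Or.inr (Or.inl (Or.inr ⟨rfl, Set.mem_insert _ _⟩))
  have hXM : ∀ a b, (G.XM u v₂).Adj a b ↔ ((((G.LC v₂).LC u).ZM u).Adj a b) := by
    intro a b
    constructor
    · rintro ⟨hne, h⟩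
      rcases h with ⟨h,_⟩|⟨⟨h1,h2⟩,_⟩
      · exact h
      · exact absurd (((hMv2 a).1 h1).trans ((hMv2 b).1 h2).symm) hne
    · intro h
      refine ⟨hMne a b h, Or.inl ⟨h, ?_⟩⟩
      rintro ⟨h1,h2⟩
      exact hMne a b h (((hMv2 a).1 h1).trans ((hMv2 b).1 h2).symm)
  exact ⟨rfl, fun a b => (hXM a b).trans (hMadj a b)⟩
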